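/- Let H and K be complex Hilbert spaces, M and N closed subspaces of H, and A, B : H → K bounded linear operators. The following are equivalent: (i) there exists a bounded linear operator C : H → K with C x = A x for all x ∈ M and C x = B x for all x ∈ N; (ii) the operator equation (A − B) ∘ P_M = X ∘ (P_{N^⊥} ∘ P_M) has a solution X that is a bounded linear operator from H to K. -/

import Mathlib

/-- The orthogonal projection of a Hilbert space onto a closed subspace,
as a continuous linear operator on the whole space. -/
noncomputable def projCLM {H : Type*} [NormedAddCommGroup H] [InnerProductSpace ℂ H]
    [CompleteSpace H] (W : Submodule ℂ H) (hW : IsClosed (W : Set H)) : H →L[ℂ] H :=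
  haveI : CompleteSpace W := hW.completeSpace_coe
  W.subtypeL.comp (W.orthogonalProjection)

theorem stmt_15 {H K : Type*} [NormedAddCommGroup H] [InnerProductSpace ℂ H] [CompleteSpace H]
    [NormedAddCommGroup K] [InnerProductSpace ℂ K] [CompleteSpace K]
    (M N : Submodule ℂ H) (hM : IsClosed (M : Set H)) (hN : IsClosed (N : Set H))
    (A B : H →L[ℂ] K) :
    (∃ C : H →L[ℂ] K, (∀ x ∈ M, C x = A x) ∧ (∀ x ∈ N, C x = B x)) ↔
      (∃ X : H →L[ℂ] K,
        (A - B).comp (projCLM M hM) =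
          X.comp ((projCLM Nᗮ (Submodule.isClosed_orthogonal N)).comp (projCLM M hM))) := by
  haveI : CompleteSpace M := hM.completeSpace_coe
  haveI : CompleteSpace N := hN.completeSpace_coe
  constructor
  · rintro ⟨C, hCA, hCB⟩
    refine ⟨C - B, ?_⟩
    ext x
    simp only [ContinuousLinearMap.comp_apply, ContinuousLinearMap.sub_apply]
    simp only [projCLM, ContinuousLinearMap.comp_apply, Submodule.subtypeL_apply,
      Submodule.orthogonalProjection_orthogonal, Submodule.starProjection_apply, map_sub]
    rw [hCA _ (M.orthogonalProjectionOnto x).2,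
      hCB _ (N.orthogonalProjectionOnto (M.orthogonalProjectionOnto x : H)).2]
    abel
  · rintro ⟨X, hX⟩
    refine ⟨B + X.comp (projCLM Nᗮ (Submodule.isClosed_orthogonal N)), ?_, ?_⟩
    · intro x hx
      have := congrArg (fun T : H →L[ℂ] K => T x) hX
      simp only [ContinuousLinearMap.comp_apply, ContinuousLinearMap.sub_apply] at this
      have hPx : (projCLM M hM) x = x := by
        simp [projCLM, ← Submodule.starProjection_apply, Submodule.starProjection_eq_self_iff.mpr hx]
      rw [hPx] at this
      simp [ContinuousLinearMap.add_apply, ContinuousLinearMap.comp_apply, ← this]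
    · intro x hx
      have : (projCLM Nᗮ (Submodule.isClosed_orthogonal N)) x = 0 := by
        simp [projCLM,
          Submodule.orthogonalProjectionOnto_apply_of_mem_orthogonal (N.le_orthogonal_orthogonal hx)]
      simp [ContinuousLinearMap.add_apply, ContinuousLinearMap.comp_apply, this]
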